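/- Let H' be the hypergraph obtained from a hypergraph H = (V, E) by adding, for each hyperedge e ∈ E, two fresh vertices a_e (labelled 1) and b_e (labelled p_e), a new hyperedge e' = {a_e, b_e}, and inserting a_e into e; label each original vertex v with p_v. Then for every assignment α to the variables {p_v} ∪ {p_e}, the hypergraph program H' has an independent set of hyperedges covering all zeros under α if and only if f_H(α) = 1. -/

import Mathlib

inductive HGPLabel (α : Type) : Type
  | zero : HGPLabel α
  | one : HGPLabel α
  | pos (p : α) : HGPLabel α
  | neg (p : α) : HGPLabel α

def HGPLabel.eval {α : Type} (σ : α → Bool) : HGPLabel α → Bool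
  | .zero => false
  | .one => true
  | .pos p => σ p
  | .neg p => !σ p

variable {V : Type} [DecidableEq V]

/-- The hyperedge `e` of `H'`, with the fresh vertex `a_e = Sum.inr (e, false)`
inserted. -/
def edgeA (e : Finset V) : Finset (V ⊕ (Finset V × Bool)) :=
  e.image Sum.inl ∪ {Sum.inr (e, false)}

/-- The new hyperedge `e' = {a_e, b_e}` with `a_e = Sum.inr (e, false)` and
`b_e = Sum.inr (e, true)`. -/
def edgeB (e : Finset V) : Finset (V ⊕ (Finset V × Bool)) :=
  {Sum.inr (e, false), Sum.inr (e, true)}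

/-- The hyperedges of `H'`. -/
def edges' (E : Finset (Finset V)) : Finset (Finset (V ⊕ (Finset V × Bool))) :=
  E.image edgeA ∪ E.image edgeB

/-- The labelling of `H'`: original vertices `v` get `p_v`, each `a_e` gets 1,
and each `b_e` gets `p_e`. -/
def label' : V ⊕ (Finset V × Bool) → HGPLabel (V ⊕ Finset V)
  | .inl v => .pos (.inl v)
  | .inr (_, false) => .one
  | .inr (e, true) => .pos (.inr e)

/-- Vertices of `H'`: all original vertices, and the fresh vertices `a_e`, `b_e`
for hyperedges `e ∈ E` only. -/
def isVert (E : Finset (Finset V)) : V ⊕ (Finset V × Bool) → Prop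
  | .inl _ => True
  | .inr (e, _) => e ∈ E

/-- The hypergraph function `f_H` of `H = (V, E)`. -/
def hyperFun (E : Finset (Finset V)) (σ : V ⊕ Finset V → Bool) : Prop :=
  ∃ X ⊆ E, (X : Set (Finset V)).Pairwise Disjoint ∧
    (∀ e ∈ X, σ (Sum.inr e) = true) ∧
    (∀ v : V, (¬ ∃ e ∈ X, v ∈ e) → σ (Sum.inl v) = true)

section Helpers

lemma mem_edgeA {e : Finset V} {w : V ⊕ (Finset V × Bool)} :
    w ∈ edgeA e ↔ (∃ v ∈ e, w = Sum.inl v) ∨ w = Sum.inr (e, false) := by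
  simp [edgeA, eq_comm]
  exact or_comm

lemma mem_edgeB {e : Finset V} {w : V ⊕ (Finset V × Bool)} :
    w ∈ edgeB e ↔ w = Sum.inr (e, false) ∨ w = Sum.inr (e, true) := by
  simp [edgeB]

lemma edgeA_inj {e e' : Finset V} (h : edgeA e = edgeA e') : e = e' := by
  have : Sum.inr (e, false) ∈ edgeA e' := h ▸ mem_edgeA.2 (Or.inr rfl)
  rcases mem_edgeA.1 this with ⟨v, _, hv⟩ | h2
  · exact absurd hv (by simp)
  · simpa using h2

lemma edgeA_ne_edgeB {e e' : Finset V} : edgeA e ≠ edgeB e' := by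
  intro h
  have : Sum.inr (e', true) ∈ edgeA e := h ▸ mem_edgeB.2 (Or.inr rfl)
  rcases mem_edgeA.1 this with ⟨v, _, hv⟩ | h2
  · simp at hv
  · simp at h2

lemma inr_true_not_mem_edgeA {e e' : Finset V} : Sum.inr (e', true) ∉ edgeA e := by
  intro h
  rcases mem_edgeA.1 h with ⟨v, _, hv⟩ | h2
  · simp at hv
  · simp at h2

lemma disjoint_edgeA_edgeA {e e' : Finset V} (hne : e ≠ e') (h : Disjoint e e') :
    Disjoint (edgeA e) (edgeA e') := by
  rw [Finset.disjoint_left]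
  intro w hw hw'
  rcases mem_edgeA.1 hw with ⟨v, hv, rfl⟩ | rfl
  · rcases mem_edgeA.1 hw' with ⟨v', hv', hvv⟩ | h2
    · obtain rfl : v = v' := by simpa using hvv
      exact Finset.disjoint_left.1 h hv hv'
    · simp at h2
  · rcases mem_edgeA.1 hw' with ⟨v', _, hvv⟩ | h2
    · simp at hvv
    · exact hne (by simpa using h2)

lemma disjoint_edgeA_edgeB {e e' : Finset V} (hne : e ≠ e') :
    Disjoint (edgeA e) (edgeB e') := by
  rw [Finset.disjoint_left]
  intro w hw hw'
  rcases mem_edgeB.1 hw' with rfl | rfl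
  · rcases mem_edgeA.1 hw with ⟨v, _, hv⟩ | h2
    · simp at hv
    · exact hne (by simpa using h2.symm)
  · exact inr_true_not_mem_edgeA hw

lemma disjoint_edgeB_edgeB {e e' : Finset V} (hne : e ≠ e') :
    Disjoint (edgeB e) (edgeB e') := by
  rw [Finset.disjoint_left]
  intro w hw hw'
  rcases mem_edgeB.1 hw with rfl | rfl <;>
    rcases mem_edgeB.1 hw' with h2 | h2 <;> exact hne (by simpa using h2)

end Helpers

/-- The monotone hypergraph program `H'` obtained from `H` by adding, for each
hyperedge `e`, fresh vertices `a_e` (labelled 1, inserted into `e`) and `b_e`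
(labelled `p_e`) and the new hyperedge `{a_e, b_e}` computes the hypergraph
function `f_H`. -/
theorem stmt_15 (E : Finset (Finset V)) :
    ∀ σ : V ⊕ Finset V → Bool,
      (∃ X ⊆ edges' E, (X : Set (Finset (V ⊕ (Finset V × Bool)))).Pairwise Disjoint ∧
        ∀ w : V ⊕ (Finset V × Bool), isVert E w →
          (label' w).eval σ = false → ∃ f ∈ X, w ∈ f) ↔
      hyperFun E σ := by
  intro σ
  constructor
  · rintro ⟨X, hXE, hdis, hcov⟩
    refine ⟨E.filter (fun e => edgeA e ∈ X), Finset.filter_subset _ _, ?_, ?_, ?_⟩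
    · intro e he e' he' hne
      simp only [Finset.coe_filter, Set.mem_setOf_eq] at he he'
      have hAne : edgeA e ≠ edgeA e' := fun h => hne (edgeA_inj h)
      have := hdis he.2 he'.2 hAne
      rw [Finset.disjoint_left]
      intro v hv hv'
      exact Finset.disjoint_left.1 this (mem_edgeA.2 (Or.inl ⟨v, hv, rfl⟩))
        (mem_edgeA.2 (Or.inl ⟨v, hv', rfl⟩))
    · intro e he
      rw [Finset.mem_filter] at he
      by_contra hσ
      have hz : (label' (Sum.inr (e, true))).eval σ = false := by
        simp only [label', HGPLabel.eval]
        exact Bool.eq_false_iff.2 fun h => hσ h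
      obtain ⟨f, hfX, hwf⟩ := hcov (Sum.inr (e, true)) (by simpa [isVert] using he.1) hz
      have hf' := hXE hfX
      rw [edges', Finset.mem_union] at hf'
      rcases hf' with hf' | hf'
      · obtain ⟨e₁, _, rfl⟩ := Finset.mem_image.1 hf'
        exact inr_true_not_mem_edgeA hwf
      · obtain ⟨e₁, _, rfl⟩ := Finset.mem_image.1 hf'
        obtain rfl : e = e₁ := by
          rcases mem_edgeB.1 hwf with h2 | h2 <;> simpa using h2
        have hd := hdis he.2 hfX (Ne.symm edgeA_ne_edgeB).symm
        exact Finset.disjoint_left.1 hd (mem_edgeA.2 (Or.inr rfl))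
          (mem_edgeB.2 (Or.inl rfl))
    · intro v hv
      by_contra hσ
      have hz : (label' (Sum.inl v)).eval σ = false := by
        simp only [label', HGPLabel.eval]
        exact Bool.eq_false_iff.2 fun h => hσ h
      obtain ⟨f, hfX, hwf⟩ := hcov (Sum.inl v) (by simp [isVert]) hz
      have hf' := hXE hfX
      rw [edges', Finset.mem_union] at hf'
      rcases hf' with hf' | hf'
      · obtain ⟨e₁, he₁, rfl⟩ := Finset.mem_image.1 hf'
        have hve₁ : v ∈ e₁ := by
          rcases mem_edgeA.1 hwf with ⟨v', hv', hvv⟩ | h2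
          · obtain rfl : v = v' := by simpa using hvv
            exact hv'
          · simp at h2
        exact hv ⟨e₁, Finset.mem_filter.2 ⟨he₁, hfX⟩, hve₁⟩
      · obtain ⟨e₁, _, rfl⟩ := Finset.mem_image.1 hf'
        rcases mem_edgeB.1 hwf with h2 | h2 <;> simp at h2
  · rintro ⟨Y, hYE, hdis, hσ, hv⟩
    refine ⟨Y.image edgeA ∪ (E \ Y).image edgeB, ?_, ?_, ?_⟩
    · apply Finset.union_subset
      · exact (Finset.image_subset_image hYE).trans
          (Finset.subset_union_left)
      · exact (Finset.image_subset_image (Finset.sdiff_subset)).trans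
          (Finset.subset_union_right)
    · intro f hf g hg hne
      simp only [Finset.coe_union, Set.mem_union, Finset.coe_image, Set.mem_image,
        Finset.mem_coe] at hf hg
      rcases hf with ⟨e, he, rfl⟩ | ⟨e, he, rfl⟩ <;>
        rcases hg with ⟨e', he', rfl⟩ | ⟨e', he', rfl⟩
      · have hee : e ≠ e' := fun h => hne (by rw [h])
        exact disjoint_edgeA_edgeA hee (hdis he he' hee)
      · have hee : e ≠ e' := by
          rintro rfl
          exact (Finset.mem_sdiff.1 he').2 he
        exact disjoint_edgeA_edgeB hee
      · have hee : e' ≠ e := by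
          rintro rfl
          exact (Finset.mem_sdiff.1 he).2 he'
        exact (disjoint_edgeA_edgeB hee).symm
      · exact disjoint_edgeB_edgeB (fun h => hne (by rw [h]))
    · rintro (v | ⟨e, b⟩) hvert hz
      · simp only [label', HGPLabel.eval] at hz
        have : ∃ e ∈ Y, v ∈ e := by
          by_contra h
          rw [hv v h] at hz
          exact Bool.noConfusion hz
        obtain ⟨e, heY, hve⟩ := this
        exact ⟨edgeA e, Finset.mem_union_left _ (Finset.mem_image_of_mem _ heY),
          mem_edgeA.2 (Or.inl ⟨v, hve, rfl⟩)⟩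
      · cases b
        · simp [label', HGPLabel.eval] at hz
        · simp only [label', HGPLabel.eval] at hz
          have heY : e ∉ Y := fun h => by rw [hσ e h] at hz; exact Bool.noConfusion hz
          have heE : e ∈ E := hvert
          exact ⟨edgeB e, Finset.mem_union_right _
            (Finset.mem_image_of_mem _ (Finset.mem_sdiff.2 ⟨heE, heY⟩)),
            mem_edgeB.2 (Or.inr rfl)⟩
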